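/- arXiv:1811.10055 — 2 statements merged into one kernel-verified Lean document; each statement's English description precedes it below -/
import Mathlib

section
/- Barbalat's lemma: if f: [0,∞) → R^n is uniformly continuous and lim_{t→∞} ∫_0^t f(τ) dτ exists and is finite, then lim_{t→∞} f(t) = 0. -/
open Filter

/-- Barbalat's lemma: if `f : [0,∞) → ℝⁿ` is uniformly continuous and
`∫₀ᵗ f(τ) dτ` has a finite limit as `t → ∞`, then `f(t) → 0`. -/
theorem barbalat (n : ℕ) (f : ℝ → EuclideanSpace ℝ (Fin n))
    (hUC : UniformContinuousOn f (Set.Ici 0))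
    (hlim : ∃ I : EuclideanSpace ℝ (Fin n),
      Tendsto (fun t => ∫ τ in (0 : ℝ)..t, f τ) atTop (nhds I)) :
    Tendsto f atTop (nhds 0) := by
  obtain ⟨I, hI⟩ := hlim
  have hcont : ContinuousOn f (Set.Ici 0) := hUC.continuousOn
  have hint : ∀ a b : ℝ, 0 ≤ a → 0 ≤ b →
      IntervalIntegrable f MeasureTheory.volume a b := by
    intro a b ha hb
    apply (hcont.mono ?_).intervalIntegrable
    intro x hx
    rw [Set.mem_uIcc] at hx
    rcases hx with h | h
    · exact le_trans ha h.1
    · exact le_trans hb h.1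
  by_contra hnot
  rw [Metric.tendsto_atTop] at hnot
  push_neg at hnot
  obtain ⟨ε, hε, hfreq⟩ := hnot
  obtain ⟨δ, hδ, hδ'⟩ := Metric.uniformContinuousOn_iff.mp hUC (ε / 2) (by positivity)
  set d : ℝ := δ / 2 with hd
  have hdpos : 0 < d := by positivity
  -- Cauchy property: F(t+d) - F(t) → 0
  have h2 : Tendsto (fun t => (∫ τ in (0:ℝ)..(t + d), f τ) - ∫ τ in (0:ℝ)..t, f τ)
      atTop (nhds 0) := by
    have := (hI.comp (tendsto_atTop_add_const_right atTop d tendsto_id)).sub hI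
    simpa using this
  have h3 := Metric.tendsto_atTop.mp h2 (d * ε / 2) (by positivity)
  obtain ⟨N, hN⟩ := h3
  obtain ⟨t, ht, hft⟩ := hfreq (max N 0)
  have htN : N ≤ t := le_trans (le_max_left _ _) ht
  have ht0 : (0 : ℝ) ≤ t := le_trans (le_max_right _ _) ht
  have hft' : ε ≤ ‖f t‖ := by simpa [dist_eq_norm] using hft
  -- ∫_t^{t+d} f = F(t+d) - F(t)
  have hsplit : (∫ τ in (0:ℝ)..(t + d), f τ) - (∫ τ in (0:ℝ)..t, f τ)
      = ∫ τ in t..(t + d), f τ :=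
    intervalIntegral.integral_interval_sub_left
      (hint 0 (t + d) le_rfl (by linarith)) (hint 0 t le_rfl ht0)
  have hcauchy : ‖∫ τ in t..(t + d), f τ‖ < d * ε / 2 := by
    have := hN t htN
    rw [dist_eq_norm, sub_zero, hsplit] at this
    exact this
  -- ∫ (f τ - f t) = ∫ f - d • f t
  have hintc : IntervalIntegrable (fun _ : ℝ => f t) MeasureTheory.volume t (t + d) :=
    intervalIntegrable_const
  have heq : (∫ τ in t..(t + d), (f τ - f t))
      = (∫ τ in t..(t + d), f τ) - d • f t := by
    rw [intervalIntegral.integral_sub (hint t (t + d) ht0 (by linarith)) hintc,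
      intervalIntegral.integral_const]
    ring_nf
  -- bound on the oscillation integral
  have hbound : ‖(∫ τ in t..(t + d), f τ) - d • f t‖ ≤ ε / 2 * d := by
    rw [← heq]
    have hle : t ≤ t + d := by linarith
    have := intervalIntegral.norm_integral_le_of_norm_le_const
      (a := t) (b := t + d) (C := ε / 2) (f := fun τ => f τ - f t) ?_
    · calc ‖∫ τ in t..(t + d), (f τ - f t)‖ ≤ ε / 2 * |t + d - t| := this
        _ = ε / 2 * d := by rw [show t + d - t = d by ring, abs_of_pos hdpos]
    · intro x hx
      rw [Set.uIoc_of_le hle] at hx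
      have hx0 : x ∈ Set.Ici (0:ℝ) := le_trans ht0 (le_of_lt hx.1)
      have hdist : dist x t < δ := by
        rw [Real.dist_eq, abs_of_pos (by linarith [hx.1])]
        have : x ≤ t + d := hx.2
        simp only [hd] at this ⊢
        linarith
      have := hδ' x hx0 t (Set.mem_Ici.mpr ht0) hdist
      rw [dist_eq_norm] at this
      exact le_of_lt this
  -- lower bound on ‖∫ f‖
  have hlow : d * ε - ε / 2 * d ≤ ‖∫ τ in t..(t + d), f τ‖ := by
    have htri : ‖d • f t‖ - ‖d • f t - ∫ τ in t..(t + d), f τ‖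
        ≤ ‖∫ τ in t..(t + d), f τ‖ := by
      have := norm_sub_norm_le (d • f t) (d • f t - ∫ τ in t..(t + d), f τ)
      simpa [sub_sub_cancel] using this
    have hrev : ‖d • f t - ∫ τ in t..(t + d), f τ‖
        = ‖(∫ τ in t..(t + d), f τ) - d • f t‖ := norm_sub_rev _ _
    have hnormsmul : ‖d • f t‖ = d * ‖f t‖ := by
      rw [norm_smul, Real.norm_eq_abs, abs_of_pos hdpos]
    have : d * ε ≤ ‖d • f t‖ := by
      rw [hnormsmul]
      exact mul_le_mul_of_nonneg_left hft' (le_of_lt hdpos)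
    linarith [hbound, htri, hrev ▸ htri]
  linarith [hcauchy, hlow]
end

section
/- Let V̇(t) = -α s^T H_1 s - β ||s||_1 - s^T Γ Q sgn(s) - s^T C q̇ - s^T g + 2λ s^T M q̇, where H_1 is symmetric positive definite, ||g|| <= k_g, ||C_i|| <= k_{c_i}, ||M_i|| <= k_{m_i}, Γ = blkdiag(γ_i I), Q = blkdiag(||q̇_i|| I). If β > k_g and γ_i > k_{c_i} + 2λ k_{m_i} for every i, then V̇ <= -α s^T H_1 s <= -α λ_min(H_1) ||s||^2 for all s, q̇. -/
open Matrix

section Helpers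

lemma dot_eq_inner' {ι : Type*} [Fintype ι] (x y : EuclideanSpace ℝ ι) :
    (x : ι → ℝ) ⬝ᵥ (y : ι → ℝ) = inner ℝ x y := by
  simp [dotProduct, PiLp.inner_apply, RCLike.inner_apply, mul_comm]

lemma clm_mulVec' {ι : Type*} [Fintype ι] [DecidableEq ι] (A : Matrix ι ι ℝ)
    (y : EuclideanSpace ℝ ι) :
    Matrix.toEuclideanCLM (𝕜 := ℝ) A y = WithLp.toLp 2 (A.mulVec y) :=
  Matrix.toEuclideanCLM_toLp A y

lemma abs_dot_mulVec_le' {ι : Type*} [Fintype ι] [DecidableEq ι] (A : Matrix ι ι ℝ)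
    (x y : EuclideanSpace ℝ ι) :
    |(x : ι → ℝ) ⬝ᵥ A.mulVec y| ≤ ‖Matrix.toEuclideanCLM (𝕜 := ℝ) A‖ * ‖y‖ * ‖x‖ := by
  rw [← WithLp.ofLp_toLp 2 (A *ᵥ y), dot_eq_inner' x (WithLp.toLp 2 (A.mulVec y)), ← clm_mulVec']
  calc |(inner ℝ x (Matrix.toEuclideanCLM (𝕜 := ℝ) A y) : ℝ)|
      ≤ ‖x‖ * ‖Matrix.toEuclideanCLM (𝕜 := ℝ) A y‖ := abs_real_inner_le_norm _ _
    _ ≤ ‖x‖ * (‖Matrix.toEuclideanCLM (𝕜 := ℝ) A‖ * ‖y‖) := by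
        exact mul_le_mul_of_nonneg_left ((Matrix.toEuclideanCLM (𝕜 := ℝ) A).le_opNorm y)
          (norm_nonneg x)
    _ = ‖Matrix.toEuclideanCLM (𝕜 := ℝ) A‖ * ‖y‖ * ‖x‖ := by ring

lemma norm_le_sum_abs' {ι : Type*} [Fintype ι] (x : EuclideanSpace ℝ ι) :
    ‖x‖ ≤ ∑ p, |x p| := by
  rw [EuclideanSpace.norm_eq]
  have h1 : ∑ p, ‖x p‖ ^ 2 ≤ (∑ p, |x p|) ^ 2 := by
    simp_rw [Real.norm_eq_abs]
    exact Finset.sum_sq_le_sq_sum_of_nonneg (fun i _ => abs_nonneg _)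
  calc Real.sqrt (∑ p, ‖x p‖ ^ 2) ≤ Real.sqrt ((∑ p, |x p|) ^ 2) := Real.sqrt_le_sqrt h1
    _ = ∑ p, |x p| := Real.sqrt_sq (Finset.sum_nonneg fun i _ => abs_nonneg _)

lemma inf_eig_quad' {N : Type*} [Fintype N] [DecidableEq N] [Nonempty N]
    {A : Matrix N N ℝ} (hA : A.IsHermitian) (x : EuclideanSpace ℝ N) :
    (⨅ p, hA.eigenvalues p) * (∑ p, x p ^ 2) ≤ (x : N → ℝ) ⬝ᵥ A.mulVec x := by
  set b := hA.eigenvectorBasis with hb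
  set c : N → ℝ := fun j => b.repr x j with hc
  have hx : x = ∑ j, c j • b j := (b.sum_repr x).symm
  have hT : ∀ j, Matrix.toEuclideanCLM (𝕜 := ℝ) A (b j) = hA.eigenvalues j • b j := by
    intro j
    rw [clm_mulVec']
    have := hA.mulVec_eigenvectorBasis j
    ext p
    exact congrFun this p
  have hib : ∀ j, (inner ℝ x (b j) : ℝ) = c j := by
    intro j
    rw [real_inner_comm]
    exact (b.repr_apply_apply x j).symm
  have key : (x : N → ℝ) ⬝ᵥ A.mulVec x = ∑ j, hA.eigenvalues j * c j ^ 2 := by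
    rw [← WithLp.ofLp_toLp 2 (A *ᵥ x), dot_eq_inner' x (WithLp.toLp 2 (A.mulVec x)), ← clm_mulVec']
    conv_lhs => rw [hx, map_sum]
    simp_rw [_root_.map_smul, hT, smul_smul, inner_sum, real_inner_smul_right]
    refine Finset.sum_congr rfl fun j _ => ?_
    rw [← hx, hib j]; ring
  rw [key]
  have hsq : ∑ p, x p ^ 2 = ∑ j, c j ^ 2 := by
    have h1 : ∑ p, x p ^ 2 = ‖x‖ ^ 2 := by
      rw [EuclideanSpace.norm_eq, Real.sq_sqrt (by positivity)]
      simp [sq_abs]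
    have h2 : ‖x‖ ^ 2 = ‖b.repr x‖ ^ 2 := by rw [b.repr.norm_map]
    have h3 : ‖b.repr x‖ ^ 2 = ∑ j, c j ^ 2 := by
      rw [EuclideanSpace.norm_eq, Real.sq_sqrt (by positivity)]
      simp [hc, sq_abs]
    rw [h1, h2, h3]
  rw [hsq, Finset.mul_sum]
  apply Finset.sum_le_sum
  intro j _
  have : (⨅ p, hA.eigenvalues p) ≤ hA.eigenvalues j := ciInf_le (Finite.bddBelow_range _) j
  nlinarith [sq_nonneg (c j)]

end Helpers

/-- Gain conditions `β > k_g`, `γᵢ > k_{cᵢ} + 2λ k_{mᵢ}` ensure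
`V̇ ≤ -α sᵀ H₁ s ≤ -α λ_min(H₁) ‖s‖²`. -/
theorem vdot_negative_definite_bound (n : ℕ) (hn : 0 < n)
    (s dq g : Fin n → EuclideanSpace ℝ (Fin 3))
    (Mi Ci : Fin n → Matrix (Fin 3) (Fin 3) ℝ)
    (H1 : Matrix (Fin n × Fin 3) (Fin n × Fin 3) ℝ)
    (hH1h : H1.IsHermitian) (hH1pd : H1.PosDef)
    (α lam β kg : ℝ) (γ km kc : Fin n → ℝ)
    (hα : 0 ≤ α) (hlam : 0 ≤ lam) (hβ : 0 ≤ β) (hγ : ∀ i, 0 ≤ γ i)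
    (hg : Real.sqrt (∑ i, ‖g i‖ ^ 2) ≤ kg)
    (hMi : ∀ i, ‖Matrix.toEuclideanCLM (𝕜 := ℝ) (Mi i)‖ ≤ km i)
    (hCi : ∀ i, ‖Matrix.toEuclideanCLM (𝕜 := ℝ) (Ci i)‖ ≤ kc i)
    (hβgain : kg < β) (hγgain : ∀ i, kc i + 2 * lam * km i < γ i)
    (Vdot : ℝ)
    (hVdot : Vdot =
      -α * ((fun p : Fin n × Fin 3 => s p.1 p.2) ⬝ᵥ
              H1.mulVec (fun p : Fin n × Fin 3 => s p.1 p.2))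
        - β * (∑ i, ∑ p, |s i p|)
        - (∑ i, γ i * ‖dq i‖ * (∑ p, |s i p|))
        - (∑ i, s i ⬝ᵥ (Ci i).mulVec (dq i))
        - (∑ i, s i ⬝ᵥ g i)
        + 2 * lam * (∑ i, s i ⬝ᵥ (Mi i).mulVec (dq i))) :
    Vdot ≤ -α * ((fun p : Fin n × Fin 3 => s p.1 p.2) ⬝ᵥ
              H1.mulVec (fun p : Fin n × Fin 3 => s p.1 p.2)) ∧
      -α * ((fun p : Fin n × Fin 3 => s p.1 p.2) ⬝ᵥ
              H1.mulVec (fun p : Fin n × Fin 3 => s p.1 p.2)) ≤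
        -α * (⨅ p, hH1h.eigenvalues p) * (∑ i, ‖s i‖ ^ 2) := by
  have hkg : 0 ≤ kg := le_trans (Real.sqrt_nonneg _) hg
  have hgi : ∀ i, ‖g i‖ ≤ kg := by
    intro i
    have h1 : ‖g i‖ ^ 2 ≤ ∑ j, ‖g j‖ ^ 2 :=
      Finset.single_le_sum (f := fun j => ‖g j‖ ^ 2) (fun j _ => sq_nonneg _) (Finset.mem_univ i)
    calc ‖g i‖ = Real.sqrt (‖g i‖ ^ 2) := (Real.sqrt_sq (norm_nonneg _)).symm
      _ ≤ Real.sqrt (∑ j, ‖g j‖ ^ 2) := Real.sqrt_le_sqrt h1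
      _ ≤ kg := hg
  constructor
  · rw [hVdot]
    have hβterm : -(∑ i, s i ⬝ᵥ g i) ≤ β * (∑ i, ∑ p, |s i p|) := by
      rw [Finset.mul_sum, ← Finset.sum_neg_distrib]
      apply Finset.sum_le_sum
      intro i _
      have hsa : (0:ℝ) ≤ ∑ p, |s i p| := Finset.sum_nonneg fun p _ => abs_nonneg _
      have h1 : -(s i ⬝ᵥ g i) ≤ ‖s i‖ * ‖g i‖ := by
        rw [dot_eq_inner' (s i) (g i)]
        have := abs_le.mp (abs_real_inner_le_norm (s i) (g i))
        linarith [this.1]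
      have h2 : ‖s i‖ * ‖g i‖ ≤ (∑ p, |s i p|) * kg :=
        mul_le_mul (norm_le_sum_abs' (s i)) (hgi i) (norm_nonneg _) hsa
      nlinarith
    have hγterm : 2 * lam * (∑ i, s i ⬝ᵥ (Mi i).mulVec (dq i))
        - (∑ i, s i ⬝ᵥ (Ci i).mulVec (dq i))
        ≤ ∑ i, γ i * ‖dq i‖ * (∑ p, |s i p|) := by
      rw [Finset.mul_sum, ← Finset.sum_sub_distrib]
      apply Finset.sum_le_sum
      intro i _
      have hC := abs_dot_mulVec_le' (Ci i) (s i) (dq i)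
      have hM := abs_dot_mulVec_le' (Mi i) (s i) (dq i)
      have hnormle : ‖s i‖ ≤ ∑ p, |s i p| := norm_le_sum_abs' (s i)
      have hnd : (0:ℝ) ≤ ‖dq i‖ := norm_nonneg _
      have hns : (0:ℝ) ≤ ‖s i‖ := norm_nonneg _
      have hCb : |s i ⬝ᵥ (Ci i).mulVec (dq i)| ≤ kc i * ‖dq i‖ * ‖s i‖ := by
        refine hC.trans ?_
        gcongr
        exact hCi i
      have hMb : |s i ⬝ᵥ (Mi i).mulVec (dq i)| ≤ km i * ‖dq i‖ * ‖s i‖ := by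
        refine hM.trans ?_
        gcongr
        exact hMi i
      have hgain := hγgain i
      have habs1 := abs_le.mp hCb
      have habs2 := abs_le.mp hMb
      have hkm : 0 ≤ km i := le_trans (norm_nonneg _) (hMi i)
      have hkc : 0 ≤ kc i := le_trans (norm_nonneg _) (hCi i)
      have key : 2 * lam * (s i ⬝ᵥ (Mi i).mulVec (dq i)) - s i ⬝ᵥ (Ci i).mulVec (dq i)
          ≤ γ i * ‖dq i‖ * ‖s i‖ := by
        nlinarith [habs1.1, habs2.2, mul_nonneg hnd hns]
      refine key.trans ?_
      have : 0 ≤ γ i * ‖dq i‖ := mul_nonneg (hγ i) hnd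
      nlinarith
    linarith
  · have hne : Nonempty (Fin n) := ⟨⟨0, hn⟩⟩
    set x : EuclideanSpace ℝ (Fin n × Fin 3) := WithLp.toLp 2 (fun p : Fin n × Fin 3 => s p.1 p.2) with hxdef
    have hquad := inf_eig_quad' hH1h x
    have hsum : ∑ p : Fin n × Fin 3, x p ^ 2 = ∑ i, ‖s i‖ ^ 2 := by
      rw [Fintype.sum_prod_type]
      refine Finset.sum_congr rfl fun i _ => ?_
      rw [EuclideanSpace.norm_eq, Real.sq_sqrt (by positivity)]
      simp [hxdef, sq_abs]
    rw [hsum] at hquad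
    have hquad' : (⨅ p, hH1h.eigenvalues p) * (∑ i, ‖s i‖ ^ 2)
        ≤ (fun p : Fin n × Fin 3 => s p.1 p.2) ⬝ᵥ
            H1.mulVec (fun p : Fin n × Fin 3 => s p.1 p.2) := hquad
    nlinarith [hquad']
end
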